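/- Let R be an M×M Hermitian positive semidefinite complex matrix and K ≥ 1. Suppose α : (0, ∞) → [0, ∞) is differentiable and satisfies, for every t > 0, the fixed-point equation α(t) = (1/K)·trace( R·(I_M + (t/(1+tα(t)))·R)⁻¹ ). Define T(t) = (I_M + (t/(1+tα(t)))·R)⁻¹ and β(t) = [(1/K)·trace(R T(t)²)] / [(1 + tα(t))² − (t²/K)·trace(R T(t) R T(t))]. Then the function t ↦ (1/K)·trace(T(t)) is differentiable on (0, ∞) and its derivative equals −β(t) for every t > 0. -/

import Mathlib

open Matrix ComplexOrder

/-- if `α : (0,∞) → [0,∞)` is differentiable and solves the fixed-point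
equation `α(t) = (1/K) tr(R (I_M + (t/(1+tα(t))) R)⁻¹)` for all `t > 0`, and
`T(t) = (I_M + (t/(1+tα(t))) R)⁻¹`,
`β(t) = [(1/K) tr(R T(t)²)] / [(1+tα(t))² − (t²/K) tr(R T(t) R T(t))]`, then
`t ↦ (1/K) tr(T(t))` is differentiable on `(0,∞)` with derivative `−β(t)`. -/
theorem stmt12 {M : ℕ} (R : Matrix (Fin M) (Fin M) ℂ) (hR : R.PosSemidef)
    (K : ℕ) (hK : 1 ≤ K) (α : ℝ → ℝ)
    (hα0 : ∀ t, 0 < t → 0 ≤ α t)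
    (hαdiff : ∀ t, 0 < t → DifferentiableAt ℝ α t)
    (hfix : ∀ t, 0 < t → (α t : ℂ) = (K : ℂ)⁻¹ *
      (R * ((1 : Matrix (Fin M) (Fin M) ℂ) + ((t / (1 + t * α t) : ℝ) : ℂ) • R)⁻¹).trace)
    (T : ℝ → Matrix (Fin M) (Fin M) ℂ)
    (hT : ∀ t, T t = ((1 : Matrix (Fin M) (Fin M) ℂ) + ((t / (1 + t * α t) : ℝ) : ℂ) • R)⁻¹)
    (β : ℝ → ℝ)
    (hβ : ∀ t, β t = ((1 / K) * (R * T t * T t).trace.re) /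
      ((1 + t * α t) ^ 2 - (t ^ 2 / K) * (R * T t * R * T t).trace.re)) :
    ∀ t, 0 < t → HasDerivAt (fun s : ℝ => (1 / K) * (T s).trace.re) (-(β t)) t := by
  intro t ht
  classical
  have hH := hR.1
  set U : Matrix (Fin M) (Fin M) ℂ := (hH.eigenvectorUnitary : Matrix (Fin M) (Fin M) ℂ) with hUdef
  set lam : Fin M → ℝ := hH.eigenvalues with hlamdef
  have hlam : ∀ i, 0 ≤ lam i := hR.eigenvalues_nonneg
  have hspec : R = U * diagonal (fun i => ((lam i : ℝ) : ℂ)) * star U := hH.spectral_theorem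
  have hUU : U * star U = 1 := (Matrix.mem_unitaryGroup_iff).mp hH.eigenvectorUnitary.2
  have hUU' : star U * U = 1 := (Matrix.mem_unitaryGroup_iff').mp hH.eigenvectorUnitary.2
  have hcanc : ∀ Z : Matrix (Fin M) (Fin M) ℂ, star U * (U * Z) = Z := by
    intro Z; rw [← Matrix.mul_assoc, hUU', Matrix.one_mul]
  have mul_conj : ∀ X Y : Matrix (Fin M) (Fin M) ℂ,
      (U * X * star U) * (U * Y * star U) = U * (X * Y) * star U := by
    intro X Y
    simp only [Matrix.mul_assoc, hcanc]
  have tr_conj : ∀ X : Matrix (Fin M) (Fin M) ℂ, (U * X * star U).trace = X.trace := by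
    intro X
    rw [Matrix.trace_mul_cycle, hUU', Matrix.one_mul]
  have prod2 : ∀ d e : Fin M → ℂ,
      (U * diagonal d * star U) * (U * diagonal e * star U)
        = U * diagonal (fun i => d i * e i) * star U := by
    intro d e
    rw [mul_conj, Matrix.diagonal_mul_diagonal]
  -- real scalar setup
  set c : ℝ → ℝ := fun s => s / (1 + s * α s) with hcdef
  have hpos : ∀ s, 0 < s → (0:ℝ) < 1 + s * α s := by
    intro s hs
    nlinarith [hα0 s hs, mul_nonneg hs.le (hα0 s hs)]
  have hc0 : ∀ s, 0 < s → 0 ≤ c s := by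
    intro s hs; exact div_nonneg hs.le (hpos s hs).le
  have hden : ∀ s, 0 < s → ∀ i, (0:ℝ) < 1 + c s * lam i := by
    intro s hs i
    nlinarith [mul_nonneg (hc0 s hs) (hlam i)]
  -- diagonal form of (1 + c s • R)
  have hsum : ∀ s : ℝ, 0 < s →
      (1 : Matrix (Fin M) (Fin M) ℂ) + ((c s : ℝ) : ℂ) • R
        = U * diagonal (fun i => ((1 + c s * lam i : ℝ) : ℂ)) * star U := by
    intro s hs
    have e1 : diagonal (fun i => ((1 + c s * lam i : ℝ) : ℂ))
        = diagonal (fun _ => (1:ℂ)) + ((c s : ℝ) : ℂ) • diagonal (fun i => ((lam i : ℝ) : ℂ)) := by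
      rw [← Matrix.diagonal_smul, Matrix.diagonal_add]
      funext i
      simp only [Pi.add_apply, Pi.smul_apply, smul_eq_mul]
      push_cast
      ring
    rw [e1, Matrix.mul_add, Matrix.add_mul, Matrix.mul_smul, Matrix.smul_mul,
      Matrix.diagonal_one, Matrix.mul_one, hUU, hspec]
  have key : ∀ s : ℝ, 0 < s →
      T s = U * diagonal (fun i => ((1 + c s * lam i : ℝ) : ℂ)⁻¹) * star U := by
    intro s hs
    have hTs : T s = ((1 : Matrix (Fin M) (Fin M) ℂ) + ((c s : ℝ) : ℂ) • R)⁻¹ := hT s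
    rw [hTs, hsum s hs]
    apply Matrix.inv_eq_right_inv
    rw [mul_conj, Matrix.diagonal_mul_diagonal]
    have : (fun i => ((1 + c s * lam i : ℝ) : ℂ) * ((1 + c s * lam i : ℝ) : ℂ)⁻¹)
        = fun _ => (1:ℂ) := by
      funext i
      rw [mul_inv_cancel₀]
      exact_mod_cast (ne_of_gt (hden s hs i))
    rw [this, Matrix.diagonal_one, Matrix.mul_one, hUU]
  -- trace computations
  have trT : ∀ s : ℝ, 0 < s →
      (T s).trace = ((∑ i, (1 + c s * lam i)⁻¹ : ℝ) : ℂ) := by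
    intro s hs
    rw [key s hs, tr_conj, Matrix.trace_diagonal]
    push_cast
    rfl
  have trRT : ∀ s : ℝ, 0 < s →
      (R * T s).trace = ((∑ i, lam i * (1 + c s * lam i)⁻¹ : ℝ) : ℂ) := by
    intro s hs
    rw [key s hs]
    conv_lhs => rw [hspec]
    rw [prod2, tr_conj, Matrix.trace_diagonal]
    push_cast
    rfl
  have trRTT : (R * T t * T t).trace
      = ((∑ i, lam i * ((1 + c t * lam i)⁻¹)^2 : ℝ) : ℂ) := by
    rw [key t ht]
    conv_lhs => rw [hspec]
    rw [prod2, prod2, tr_conj, Matrix.trace_diagonal]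
    push_cast
    congr 1
    funext i
    ring
  have trRTRT : (R * T t * R * T t).trace
      = ((∑ i, (lam i)^2 * ((1 + c t * lam i)⁻¹)^2 : ℝ) : ℂ) := by
    rw [key t ht]
    conv_lhs => rw [hspec]
    rw [prod2, prod2, prod2, tr_conj, Matrix.trace_diagonal]
    push_cast
    congr 1
    funext i
    ring
  -- derivative of c
  set α' : ℝ := deriv α t with hα'def
  have hα' : HasDerivAt α α' t := (hαdiff t ht).hasDerivAt
  have hinner : HasDerivAt (fun s : ℝ => 1 + s * α s) (α t + t * α') t := by
    simpa using (((hasDerivAt_id t).mul hα').const_add 1)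
  set c' : ℝ := (1 * (1 + t * α t) - t * (α t + t * α')) / (1 + t * α t)^2 with hc'def
  have hcder : HasDerivAt c c' t := (hasDerivAt_id t).div hinner (ne_of_gt (hpos t ht))
  -- fixed point, real form
  have hKne : ((K:ℝ)) ≠ 0 := by positivity
  have hfixR : ∀ s, 0 < s → α s = (1/(K:ℝ)) * ∑ i, lam i * (1 + c s * lam i)⁻¹ := by
    intro s hs
    have h1 := hfix s hs
    rw [← hT s] at h1
    rw [trRT s hs] at h1
    have : ((α s : ℝ) : ℂ) = (((1/(K:ℝ)) * ∑ i, lam i * (1 + c s * lam i)⁻¹ : ℝ) : ℂ) := by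
      rw [h1]; push_cast; ring
    exact_mod_cast this
  -- derivative of the RHS of fixed point
  have hterm : ∀ i, HasDerivAt (fun s => (1 + c s * lam i)⁻¹)
      (-(c' * lam i) / (1 + c t * lam i)^2) t := by
    intro i
    have h1 : HasDerivAt (fun s => 1 + c s * lam i) (c' * lam i) t :=
      (hcder.mul_const (lam i)).const_add 1
    exact h1.inv (ne_of_gt (hden t ht i))
  have hRHS : HasDerivAt (fun s => (1/(K:ℝ)) * ∑ i, lam i * (1 + c s * lam i)⁻¹)
      ((1/(K:ℝ)) * ∑ i, lam i * (-(c' * lam i) / (1 + c t * lam i)^2)) t := by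
    apply HasDerivAt.const_mul
    exact HasDerivAt.fun_sum (fun i _ => (hterm i).const_mul (lam i))
  set A : ℝ := ∑ i, lam i * ((1 + c t * lam i)⁻¹)^2 with hAdef
  set B : ℝ := ∑ i, (lam i)^2 * ((1 + c t * lam i)⁻¹)^2 with hBdef
  have hsumB : ∑ i, lam i * (-(c' * lam i) / (1 + c t * lam i)^2) = -c' * B := by
    rw [hBdef, Finset.mul_sum]
    apply Finset.sum_congr rfl
    intro i _
    field_simp
  have hev : α =ᶠ[nhds t] (fun s => (1/(K:ℝ)) * ∑ i, lam i * (1 + c s * lam i)⁻¹) := by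
    filter_upwards [isOpen_Ioi.mem_nhds (Set.mem_Ioi.mpr ht)] with s hs
    exact hfixR s hs
  have hα'eq : α' = (1/(K:ℝ)) * (-c' * B) := by
    have := hRHS.congr_of_eventuallyEq hev
    rw [hsumB] at this
    exact hα'.unique this
  -- the key identity c' * D = 1
  set D : ℝ := (1 + t * α t)^2 - t^2 * ((1/(K:ℝ)) * B) with hDdef
  have hcp : c' * (1 + t * α t)^2 = 1 - t^2 * α' := by
    rw [hc'def, div_mul_cancel₀ _ (pow_ne_zero 2 (ne_of_gt (hpos t ht)))]
    ring
  have hcD : c' * D = 1 := by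
    rw [hDdef]
    have h2 : c' * ((1/(K:ℝ)) * B) = -α' := by rw [hα'eq]; ring
    linear_combination hcp - t^2 * h2
  have hDne : D ≠ 0 := by
    intro h; rw [h, mul_zero] at hcD; exact zero_ne_one hcD
  -- β value
  have hβt : β t = ((1/(K:ℝ)) * A) / D := by
    rw [hβ t, trRTT, trRTRT, Complex.ofReal_re, Complex.ofReal_re, hDdef]
    congr 1
    ring
  -- final derivative
  have hg : HasDerivAt (fun s => (1/(K:ℝ)) * ∑ i, (1 + c s * lam i)⁻¹)
      ((1/(K:ℝ)) * ∑ i, (-(c' * lam i) / (1 + c t * lam i)^2)) t := by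
    apply HasDerivAt.const_mul
    exact HasDerivAt.fun_sum (fun i _ => hterm i)
  have hsumA : ∑ i, (-(c' * lam i) / (1 + c t * lam i)^2) = -c' * A := by
    rw [hAdef, Finset.mul_sum]
    apply Finset.sum_congr rfl
    intro i _
    field_simp
  have hval : (1/(K:ℝ)) * ∑ i, (-(c' * lam i) / (1 + c t * lam i)^2) = -(β t) := by
    rw [hsumA, hβt]
    have hc'val : c' = 1 / D := eq_div_of_mul_eq hDne hcD
    rw [hc'val]
    field_simp
  rw [← hval]
  apply hg.congr_of_eventuallyEq
  filter_upwards [isOpen_Ioi.mem_nhds (Set.mem_Ioi.mpr ht)] with s hs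
  rw [trT s hs, Complex.ofReal_re]
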